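/- arXiv:1812.05579 — 3 statements merged into one kernel-verified Lean document; each statement's English description precedes it below -/
import Mathlib

section
/- Let ψ : GL⁺ × Sym(3) → ℝ be a strain energy with ψ(·;S) continuously differentiable for every S ∈ Sym(3), with Piola–Kirchhoff stress P(F;S) (the Frobenius gradient of ψ(·;S) at F) and Cauchy stress T(F;S) = (det F)⁻¹ P(F;S) Fᵀ. Fix F₁ ∈ GL⁺ and S ∈ Sym(3), and assume the initial stress reference independence condition at the level of stresses: T(F₂F₁;S) = T(F₂; T(F₁;S)) for all F₂ ∈ GL⁺. Then there exists a constant c ∈ ℝ such that ψ(F₂F₁;S) = (det F₁)·ψ(F₂; T(F₁;S)) + c for all F₂ ∈ GL⁺. -/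
open Matrix

section ConnAux
open Real


abbrev M3' : Type := Matrix (Fin 3) (Fin 3) ℝ

def Dne : Set M3' := {F | F.det ≠ 0}

noncomputable def Nmat : M3' := Matrix.diagonal ![-1, 1, 1]

lemma det_Nmat : Nmat.det = -1 := by
  simp [Nmat, Matrix.det_diagonal, Fin.prod_univ_three]

lemma joinedIn_of_map (f : ℝ → M3') (hf : Continuous f) {A B : M3'}
    (h0 : f 0 = A) (h1 : f 1 = B) (hd : ∀ t ∈ Set.Icc (0:ℝ) 1, (f t).det ≠ 0) :
    JoinedIn Dne A B := by
  refine ⟨⟨⟨fun t => f t, hf.comp continuous_subtype_val⟩, by simp [h0], by simp [h1]⟩, ?_⟩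
  intro t
  exact hd t t.2

lemma joinedIn_mul {A B X Y : M3'} (h1 : JoinedIn Dne A X) (h2 : JoinedIn Dne B Y) :
    JoinedIn Dne (A * B) (X * Y) := by
  obtain ⟨γ, hγ⟩ := h1
  obtain ⟨δ, hδ⟩ := h2
  refine ⟨⟨⟨fun t => γ t * δ t, (γ.continuous.matrix_mul δ.continuous)⟩, by simp, by simp⟩, ?_⟩
  intro t
  have a1 := hγ t
  have a2 := hδ t
  simp only [Dne, Set.mem_setOf_eq] at a1 a2 ⊢
  simpa [Matrix.det_mul] using mul_ne_zero a1 a2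

lemma joined_d1 : JoinedIn Dne (Matrix.diagonal ![-1,-1,1]) 1 := by
  apply joinedIn_of_map (fun s => !![-Real.cos (π*s), -Real.sin (π*s), 0;
      Real.sin (π*s), -Real.cos (π*s), 0; 0, 0, 1])
  · apply continuous_matrix
    intro i j
    fin_cases i <;> fin_cases j <;> simp <;> fun_prop
  · ext i j
    fin_cases i <;> fin_cases j <;> simp [Matrix.diagonal, Matrix.vecHead, Matrix.vecTail]
  · ext i j
    fin_cases i <;> fin_cases j <;> simp [Matrix.one_apply, Matrix.vecHead, Matrix.vecTail]
  · intro t _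
    rw [Matrix.det_fin_three]
    simp
    nlinarith [Real.sin_sq_add_cos_sq (π*t)]

lemma joined_d2 : JoinedIn Dne (Matrix.diagonal ![-1,1,-1]) 1 := by
  apply joinedIn_of_map (fun s => !![-Real.cos (π*s), 0, -Real.sin (π*s);
      0, 1, 0; Real.sin (π*s), 0, -Real.cos (π*s)])
  · apply continuous_matrix
    intro i j
    fin_cases i <;> fin_cases j <;> simp <;> fun_prop
  · ext i j
    fin_cases i <;> fin_cases j <;> simp [Matrix.diagonal, Matrix.vecHead, Matrix.vecTail]
  · ext i j
    fin_cases i <;> fin_cases j <;> simp [Matrix.one_apply, Matrix.vecHead, Matrix.vecTail]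
  · intro t _
    rw [Matrix.det_fin_three]
    simp
    nlinarith [Real.sin_sq_add_cos_sq (π*t)]

lemma joined_d3 : JoinedIn Dne (Matrix.diagonal ![1,-1,-1]) 1 := by
  apply joinedIn_of_map (fun s => !![1, 0, 0; 0, -Real.cos (π*s), -Real.sin (π*s);
      0, Real.sin (π*s), -Real.cos (π*s)])
  · apply continuous_matrix
    intro i j
    fin_cases i <;> fin_cases j <;> simp <;> fun_prop
  · ext i j
    fin_cases i <;> fin_cases j <;> simp [Matrix.diagonal, Matrix.vecHead, Matrix.vecTail]
  · ext i j
    fin_cases i <;> fin_cases j <;> simp [Matrix.one_apply, Matrix.vecHead, Matrix.vecTail]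
  · intro t _
    rw [Matrix.det_fin_three]
    simp
    nlinarith [Real.sin_sq_add_cos_sq (π*t)]

lemma joined_n1 : JoinedIn Dne (Matrix.diagonal ![1,-1,1]) Nmat := by
  apply joinedIn_of_map (fun s => !![Real.cos (π*s), Real.sin (π*s), 0;
      Real.sin (π*s), -Real.cos (π*s), 0; 0, 0, 1])
  · apply continuous_matrix
    intro i j
    fin_cases i <;> fin_cases j <;> simp <;> fun_prop
  · ext i j
    fin_cases i <;> fin_cases j <;> simp [Matrix.diagonal, Matrix.vecHead, Matrix.vecTail]
  · ext i j
    fin_cases i <;> fin_cases j <;> simp [Nmat, Matrix.diagonal, Matrix.vecHead, Matrix.vecTail]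
  · intro t _
    rw [Matrix.det_fin_three]
    simp
    nlinarith [Real.sin_sq_add_cos_sq (π*t)]

lemma joined_n2 : JoinedIn Dne (Matrix.diagonal ![1,1,-1]) Nmat := by
  apply joinedIn_of_map (fun s => !![Real.cos (π*s), 0, Real.sin (π*s);
      0, 1, 0; Real.sin (π*s), 0, -Real.cos (π*s)])
  · apply continuous_matrix
    intro i j
    fin_cases i <;> fin_cases j <;> simp <;> fun_prop
  · ext i j
    fin_cases i <;> fin_cases j <;> simp [Matrix.diagonal, Matrix.vecHead, Matrix.vecTail]
  · ext i j
    fin_cases i <;> fin_cases j <;> simp [Nmat, Matrix.diagonal, Matrix.vecHead, Matrix.vecTail]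
  · intro t _
    rw [Matrix.det_fin_three]
    simp
    nlinarith [Real.sin_sq_add_cos_sq (π*t)]

lemma joined_n3 : JoinedIn Dne (Matrix.diagonal ![-1,-1,-1]) Nmat := by
  apply joinedIn_of_map (fun s => !![-1, 0, 0; 0, -Real.cos (π*s), -Real.sin (π*s);
      0, Real.sin (π*s), -Real.cos (π*s)])
  · apply continuous_matrix
    intro i j
    fin_cases i <;> fin_cases j <;> simp <;> fun_prop
  · ext i j
    fin_cases i <;> fin_cases j <;> simp [Matrix.diagonal, Matrix.vecHead, Matrix.vecTail]
  · ext i j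
    fin_cases i <;> fin_cases j <;> simp [Nmat, Matrix.diagonal, Matrix.vecHead, Matrix.vecTail]
  · intro t _
    rw [Matrix.det_fin_three]
    simp
    nlinarith [Real.sin_sq_add_cos_sq (π*t)]

/-- Any diagonal matrix with nonzero determinant is joined in `Dne` to `1` or to `Nmat`. -/
lemma joined_diagonal (D : Fin 3 → ℝ) (hD : (Matrix.diagonal D).det ≠ 0) :
    JoinedIn Dne (Matrix.diagonal D) 1 ∨ JoinedIn Dne (Matrix.diagonal D) Nmat := by
  have hDi : ∀ i, D i ≠ 0 := by
    intro i
    rw [Matrix.det_diagonal] at hD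
    exact fun h => hD (Finset.prod_eq_zero (Finset.mem_univ i) h)
  set s : Fin 3 → ℝ := fun i => if 0 < D i then 1 else -1 with hs
  have hjoin : JoinedIn Dne (Matrix.diagonal D) (Matrix.diagonal s) := by
    apply joinedIn_of_map (fun t => Matrix.diagonal (fun i => (1-t) * D i + t * s i))
    · exact (continuous_pi fun i => by fun_prop).matrix_diagonal
    · simp
    · simp
    · intro t ht
      rw [Matrix.det_diagonal]
      apply Finset.prod_ne_zero_iff.2
      intro i _
      rcases lt_or_gt_of_ne (hDi i) with hneg | hpos
      · have : s i = -1 := by simp [hs, not_lt.2 hneg.le, asymm hneg]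
        rw [this]
        rcases eq_or_lt_of_le ht.1 with h0 | h0
        · simp [← h0]; nlinarith
        · nlinarith [ht.2, hneg]
      · have : s i = 1 := by simp [hs, hpos]
        rw [this]
        rcases eq_or_lt_of_le ht.1 with h0 | h0
        · simp [← h0]; nlinarith
        · nlinarith [ht.2, hpos]
  have hsv : s = ![s 0, s 1, s 2] := by
    funext i; fin_cases i <;> rfl
  have hcase : ∀ i, s i = 1 ∨ s i = -1 := by
    intro i; by_cases h : 0 < D i <;> simp [hs, h]
  have h0 := hcase 0
  have h1 := hcase 1
  have h2 := hcase 2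
  rw [hsv] at hjoin
  have hone : (Matrix.diagonal ![(1:ℝ),1,1]) = 1 := by
    ext i j; fin_cases i <;> fin_cases j <;>
      simp [Matrix.diagonal, Matrix.one_apply, Matrix.vecHead, Matrix.vecTail]
  rcases h0 with h0 | h0 <;> rcases h1 with h1 | h1 <;> rcases h2 with h2 | h2 <;>
      rw [h0, h1, h2] at hjoin
  · rw [hone] at hjoin; exact Or.inl hjoin
  · exact Or.inr (hjoin.trans joined_n2)
  · exact Or.inr (hjoin.trans joined_n1)
  · exact Or.inl (hjoin.trans joined_d3)
  · exact Or.inr hjoin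
  · exact Or.inl (hjoin.trans joined_d2)
  · exact Or.inl (hjoin.trans joined_d1)
  · exact Or.inr (hjoin.trans joined_n3)

lemma joined_transvection (t : Matrix.TransvectionStruct (Fin 3) ℝ) :
    JoinedIn Dne t.toMatrix 1 := by
  apply joinedIn_of_map (fun s => 1 + ((1-s) * t.c) • Matrix.single t.i t.j (1:ℝ))
  · exact continuous_const.add ((by fun_prop : Continuous fun s : ℝ => (1-s)*t.c).smul
      continuous_const)
  · rw [Matrix.smul_single]
    simp [Matrix.TransvectionStruct.toMatrix, Matrix.transvection]
  · simp
  · intro u _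
    rw [Matrix.smul_single, smul_eq_mul, mul_one]
    rw [show (1 : M3') + Matrix.single t.i t.j ((1-u) * t.c) =
        Matrix.transvection t.i t.j ((1-u) * t.c) from rfl]
    rw [Matrix.det_transvection_of_ne _ _ t.hij]
    norm_num

lemma det_sign_along_path {A B : M3'} (γ : Path A B) (hγ : ∀ t, γ t ∈ Dne)
    (hB : 0 < B.det) : ∀ t, 0 < (γ t).det := by
  intro t
  rcases lt_or_gt_of_ne (hγ t) with h | h
  · exfalso
    have hc : Continuous fun u : unitInterval => (γ u).det := γ.continuous.matrix_det
    have hpre : IsPreconnected (Set.range fun u : unitInterval => (γ u).det) :=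
      isPreconnected_range hc
    have hmemB : B.det ∈ Set.range fun u : unitInterval => (γ u).det :=
      ⟨1, by show (γ 1).det = B.det; rw [γ.target]⟩
    have hIcc := hpre.Icc_subset ⟨t, rfl⟩ hmemB
    obtain ⟨u, hu⟩ := hIcc ⟨h.le, hB.le⟩
    exact hγ u hu
  · exact h

/-- Any matrix with positive determinant is path-connected to `1` within `GL⁺`. -/
lemma joined_GLpos_one {M : M3'} (hM : 0 < M.det) :
    JoinedIn {F : M3' | 0 < F.det} M 1 := by
  have hNN : Nmat * Nmat = 1 := by
    rw [Nmat, Matrix.diagonal_mul_diagonal]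
    have : (fun i => (![-1, 1, 1] : Fin 3 → ℝ) i * ![-1, 1, 1] i) = fun _ => (1:ℝ) := by
      funext i; fin_cases i <;> simp [Matrix.vecHead, Matrix.vecTail]
    rw [this]; exact Matrix.diagonal_one
  have key : JoinedIn Dne M 1 ∨ JoinedIn Dne M Nmat := by
    apply Matrix.diagonal_transvection_induction_of_det_ne_zero _ M (ne_of_gt hM)
    · exact fun D hD => joined_diagonal D hD
    · exact fun t => Or.inl (joined_transvection t)
    · rintro A B _ _ (hA | hA) (hB | hB)
      · exact Or.inl (by simpa using joinedIn_mul hA hB)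
      · exact Or.inr (by simpa using joinedIn_mul hA hB)
      · exact Or.inr (by simpa using joinedIn_mul hA hB)
      · exact Or.inl (by simpa [hNN] using joinedIn_mul hA hB)
  rcases key with h | h
  · obtain ⟨γ, hγ⟩ := h
    have := det_sign_along_path γ hγ (by simp)
    exact ⟨γ, fun t => this t⟩
  · exfalso
    obtain ⟨γ, hγ⟩ := h.symm
    have := det_sign_along_path γ hγ hM
    have h1 := this 0
    simp only [γ.source] at h1
    rw [det_Nmat] at h1
    linarith

lemma GLpos_isPreconnected : IsPreconnected {F : M3' | 0 < F.det} := by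
  have hpc : IsPathConnected {F : M3' | 0 < F.det} := by
    refine ⟨1, by simp, ?_⟩
    intro F hF
    exact (joined_GLpos_one hF).symm
  exact hpc.isConnected.isPreconnected

end ConnAux

abbrev M3'' : Type := Matrix (Fin 3) (Fin 3) ℝ

/-- A function on an open preconnected subset of matrix space with vanishing directional
derivatives is constant. -/
lemma const_of_dirDeriv_zero (g : M3'' → ℝ) (U : Set M3'') (hU : IsOpen U)
    (hpre : IsPreconnected U)
    (h : ∀ F ∈ U, ∀ H : M3'', HasDerivAt (fun t : ℝ => g (F + t • H)) 0 0)
    {F G : M3''} (hF : F ∈ U) (hG : G ∈ U) : g F = g G := by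
  letI : NormedAddCommGroup M3'' := Matrix.normedAddCommGroup
  letI : NormedSpace ℝ M3'' := Matrix.normedSpace
  -- derivative at arbitrary points along a line
  have hshift : ∀ F' ∈ U, ∀ (H : M3'') (t₀ : ℝ),
      HasDerivAt (fun t : ℝ => g ((F' - t₀ • H) + t • H)) 0 t₀ := by
    intro F' hF' H t₀
    have hc : HasDerivAt ((fun t : ℝ => g (F' + t • H)) ∘ fun t => t - t₀) (0 * 1) t₀ :=
      HasDerivAt.comp t₀ (by simpa using h F' hF' H) ((hasDerivAt_id t₀).sub_const t₀)
    rw [zero_mul] at hc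
    have heq : ((fun t : ℝ => g (F' + t • H)) ∘ fun t => t - t₀) =
        fun t : ℝ => g ((F' - t₀ • H) + t • H) := by
      funext t
      simp only [Function.comp]
      congr 1
      rw [sub_smul]
      abel
    rw [heq] at hc
    exact hc
  -- local constancy on balls
  have hloc : ∀ F' ∈ U, ∃ ε > 0, Metric.ball F' ε ⊆ U ∧
      ∀ G' ∈ Metric.ball F' ε, g G' = g F' := by
    intro F' hF'
    obtain ⟨ε, hε, hball⟩ := Metric.isOpen_iff.1 hU F' hF'
    refine ⟨ε, hε, hball, ?_⟩
    intro G' hG'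
    set H := G' - F' with hH
    have hseg : ∀ t ∈ Set.Icc (0:ℝ) 1, F' + t • H ∈ Metric.ball F' ε := by
      intro t ht
      rw [Metric.mem_ball, dist_eq_norm, add_sub_cancel_left, norm_smul]
      calc ‖t‖ * ‖H‖ ≤ 1 * ‖H‖ := by
            apply mul_le_mul_of_nonneg_right _ (norm_nonneg _)
            rw [Real.norm_eq_abs, abs_of_nonneg ht.1]; exact ht.2
        _ = ‖H‖ := one_mul _
        _ < ε := by rw [hH, ← dist_eq_norm]; exact hG'
    have hder : ∀ t ∈ Set.Icc (0:ℝ) 1, HasDerivAt (fun u : ℝ => g (F' + u • H)) 0 t := by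
      intro t ht
      have hmem : F' + t • H ∈ U := hball (hseg t ht)
      have hds := hshift (F' + t • H) hmem H t
      have heq : (fun u : ℝ => g ((F' + t • H) - t • H + u • H)) =
          fun u : ℝ => g (F' + u • H) := by
        funext u
        congr 1
        abel
      rw [heq] at hds
      exact hds
    have hcont : ContinuousOn (fun u : ℝ => g (F' + u • H)) (Set.Icc 0 1) :=
      fun t ht => (hder t ht).continuousAt.continuousWithinAt
    have := constant_of_has_deriv_right_zero hcont
      (fun t ht => (hder t (Set.mem_Icc_of_Ico ht)).hasDerivWithinAt) 1 (by norm_num)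
    simpa [hH] using this
  -- locally constant on the subtype, hence constant
  haveI : PreconnectedSpace U := Subtype.preconnectedSpace hpre
  have hlc : IsLocallyConstant (fun x : U => g x) := by
    rw [IsLocallyConstant.iff_exists_open]
    intro x
    obtain ⟨ε, hε, hball, hconst⟩ := hloc x x.2
    refine ⟨Subtype.val ⁻¹' Metric.ball (x : M3'') ε, ?_, ?_, ?_⟩
    · exact (Metric.isOpen_ball).preimage continuous_subtype_val
    · exact Metric.mem_ball_self hε
    · intro y hy
      exact hconst y hy
  exact hlc.apply_eq_of_preconnectedSpace ⟨F, hF⟩ ⟨G, hG⟩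

/-- GL⁺: the set of 3×3 real matrices with positive determinant. -/
def GLpos : Set (Matrix (Fin 3) (Fin 3) ℝ) := {F | 0 < F.det}

/-- The Cauchy stress of an initially stressed material with Piola–Kirchhoff stress `P`:
`T(F;S) = (det F)⁻¹ P(F;S) Fᵀ`. -/
noncomputable def cauchy
    (P : Matrix (Fin 3) (Fin 3) ℝ → Matrix (Fin 3) (Fin 3) ℝ → Matrix (Fin 3) (Fin 3) ℝ)
    (F S : Matrix (Fin 3) (Fin 3) ℝ) : Matrix (Fin 3) (Fin 3) ℝ :=
  (F.det)⁻¹ • (P F S * Fᵀ)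

/-- If the ISRI condition holds at the level of the Cauchy stresses for a fixed `F₁ ∈ GL⁺`
and a fixed symmetric initial stress `S`, then the corresponding multiplicative relation
holds for the strain energy up to an additive constant. -/
theorem ISRI_stress_implies_energy_relation
    (ψ : Matrix (Fin 3) (Fin 3) ℝ → Matrix (Fin 3) (Fin 3) ℝ → ℝ)
    (P : Matrix (Fin 3) (Fin 3) ℝ → Matrix (Fin 3) (Fin 3) ℝ → Matrix (Fin 3) (Fin 3) ℝ)
    (hgrad : ∀ S : Matrix (Fin 3) (Fin 3) ℝ, ∀ F ∈ GLpos, ∀ H : Matrix (Fin 3) (Fin 3) ℝ,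
      HasDerivAt (fun t : ℝ => ψ (F + t • H) S) (Matrix.trace ((P F S)ᵀ * H)) 0)
    (hψcont : ∀ S : Matrix (Fin 3) (Fin 3) ℝ, ContinuousOn (fun F => ψ F S) GLpos)
    (hPcont : ∀ S : Matrix (Fin 3) (Fin 3) ℝ, ContinuousOn (fun F => P F S) GLpos)
    (F₁ : Matrix (Fin 3) (Fin 3) ℝ) (hF₁ : F₁ ∈ GLpos)
    (S : Matrix (Fin 3) (Fin 3) ℝ) (hS : Sᵀ = S)
    (hISRI : ∀ F₂ ∈ GLpos, cauchy P (F₂ * F₁) S = cauchy P F₂ (cauchy P F₁ S)) :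
    ∃ c : ℝ, ∀ F₂ ∈ GLpos,
      ψ (F₂ * F₁) S = F₁.det * ψ F₂ (cauchy P F₁ S) + c := by

  classical
  set T₁ := cauchy P F₁ S with hT₁def
  have hdF₁ : (0:ℝ) < F₁.det := hF₁
  have hdF₁ne : F₁.det ≠ 0 := ne_of_gt hdF₁
  set g : Matrix (Fin 3) (Fin 3) ℝ → ℝ := fun F₂ => ψ (F₂ * F₁) S - F₁.det * ψ F₂ T₁
    with hgdef
  have hUopen : IsOpen GLpos := by
    have : GLpos = (fun F : Matrix (Fin 3) (Fin 3) ℝ => F.det) ⁻¹' Set.Ioi 0 := rfl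
    rw [this]
    exact isOpen_Ioi.preimage continuous_id.matrix_det
  have hkey : ∀ F₂ ∈ GLpos, P F₂ T₁ = (F₁.det)⁻¹ • (P (F₂ * F₁) S * F₁ᵀ) := by
    intro F₂ hF₂
    have hdF₂ : (0:ℝ) < F₂.det := hF₂
    have hdF₂ne : F₂.det ≠ 0 := ne_of_gt hdF₂
    have h := hISRI F₂ hF₂
    simp only [cauchy, ← hT₁def] at h
    have hTinv : F₂ᵀ * (F₂ᵀ)⁻¹ = 1 :=
      Matrix.mul_nonsing_inv _ (by rw [Matrix.det_transpose]; exact isUnit_iff_ne_zero.mpr hdF₂ne)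
    have e1 : P F₂ T₁ = F₂.det • ((F₂.det)⁻¹ • (P F₂ T₁ * F₂ᵀ) * (F₂ᵀ)⁻¹) := by
      rw [Matrix.smul_mul, Matrix.mul_assoc, hTinv, Matrix.mul_one, smul_smul,
        mul_inv_cancel₀ hdF₂ne, one_smul]
    rw [← h] at e1
    rw [e1]
    simp only [Matrix.det_mul, Matrix.transpose_mul, Matrix.smul_mul, Matrix.mul_assoc,
      hTinv, Matrix.mul_one, smul_smul]
    congr 1
    field_simp
  have hzero : ∀ F₂ ∈ GLpos, ∀ H : Matrix (Fin 3) (Fin 3) ℝ,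
      HasDerivAt (fun t : ℝ => g (F₂ + t • H)) 0 0 := by
    intro F₂ hF₂ H
    have hF₂F₁ : F₂ * F₁ ∈ GLpos := by
      simp only [GLpos, Set.mem_setOf_eq, Matrix.det_mul]
      exact mul_pos hF₂ hF₁
    have h1 : HasDerivAt (fun t : ℝ => ψ ((F₂ + t • H) * F₁) S)
        (Matrix.trace ((P (F₂ * F₁) S)ᵀ * (H * F₁))) 0 := by
      have h0 := hgrad S (F₂ * F₁) hF₂F₁ (H * F₁)
      have heq : (fun t : ℝ => ψ (F₂ * F₁ + t • (H * F₁)) S) =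
          fun t : ℝ => ψ ((F₂ + t • H) * F₁) S := by
        funext t
        rw [Matrix.add_mul, Matrix.smul_mul]
      rwa [heq] at h0
    have h2 := hgrad T₁ F₂ hF₂ H
    have h3 := h1.sub (h2.const_mul F₁.det)
    have hval : Matrix.trace ((P (F₂ * F₁) S)ᵀ * (H * F₁)) -
        F₁.det * Matrix.trace ((P F₂ T₁)ᵀ * H) = 0 := by
      rw [hkey F₂ hF₂, Matrix.transpose_smul, Matrix.transpose_mul,
        Matrix.transpose_transpose, Matrix.smul_mul, Matrix.trace_smul, smul_eq_mul,
        ← mul_assoc F₁.det, mul_inv_cancel₀ hdF₁ne, one_mul, ← Matrix.mul_assoc,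
        Matrix.trace_mul_cycle, sub_self]
    rw [hval] at h3
    have hgeq : (fun t : ℝ => g (F₂ + t • H)) =
        fun t : ℝ => ψ ((F₂ + t • H) * F₁) S - F₁.det * ψ (F₂ + t • H) T₁ := by
      funext t
      rw [hgdef]
    rw [hgeq]
    exact h3
  have hprecon : IsPreconnected GLpos := GLpos_isPreconnected
  have h1mem : (1 : Matrix (Fin 3) (Fin 3) ℝ) ∈ GLpos := by
    simp [GLpos]
  refine ⟨ψ (1 * F₁) S - F₁.det * ψ 1 T₁, ?_⟩
  intro F₂ hF₂
  have hc := const_of_dirDeriv_zero g GLpos hUopen hprecon hzero hF₂ h1mem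
  rw [hgdef] at hc
  simp only at hc
  linarith
end

section
/- Let ψ : GL⁺ × Sym(3) → ℝ be a strain energy with ψ(·;S) differentiable for every S, with Piola–Kirchhoff stress P(F;S) (the Frobenius gradient of ψ(·;S) at F) and Cauchy stress T(F;S) = (det F)⁻¹ P(F;S) Fᵀ. Assume ψ satisfies the initial stress reference independence (ISRI) condition: ψ(F₂F₁;S) = (det F₁)·ψ(F₂; T(F₁;S)) for all F₁, F₂ ∈ GL⁺ and all S ∈ Sym(3). Fix S ∈ Sym(3) and suppose Ĝ ∈ GL⁺ satisfies T(Ĝ;S) = 0. Then ψ(F;S) = (det Ĝ)·ψ(F Ĝ⁻¹; 0) for all F ∈ GL⁺, i.e. the initially stressed energy coincides with the energy of the relaxed material ψ₀ = ψ(·;0) evaluated on the elastic distortion F Ĝ⁻¹, weighted by det Ĝ. -/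
open Matrix

/-- If the strain energy satisfies the ISRI condition and `Ĝ ∈ GL⁺` is a relaxing
distortion for the symmetric initial stress `S` (i.e. `T(Ĝ;S) = 0`), then the initially
stressed energy coincides with the relaxed energy evaluated on the elastic distortion
`F Ĝ⁻¹`, weighted by `det Ĝ`. -/
theorem ISRI_energy_is_distortion_energy
    (ψ : Matrix (Fin 3) (Fin 3) ℝ → Matrix (Fin 3) (Fin 3) ℝ → ℝ)
    (P : Matrix (Fin 3) (Fin 3) ℝ → Matrix (Fin 3) (Fin 3) ℝ → Matrix (Fin 3) (Fin 3) ℝ)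
    (hgrad : ∀ S : Matrix (Fin 3) (Fin 3) ℝ, Sᵀ = S → ∀ F ∈ GLpos,
      ∀ H : Matrix (Fin 3) (Fin 3) ℝ,
      HasDerivAt (fun t : ℝ => ψ (F + t • H) S) (Matrix.trace ((P F S)ᵀ * H)) 0)
    (hISRI : ∀ F₁ ∈ GLpos, ∀ F₂ ∈ GLpos, ∀ S : Matrix (Fin 3) (Fin 3) ℝ, Sᵀ = S →
      ψ (F₂ * F₁) S = F₁.det * ψ F₂ (cauchy P F₁ S))
    (S : Matrix (Fin 3) (Fin 3) ℝ) (hS : Sᵀ = S)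
    (G : Matrix (Fin 3) (Fin 3) ℝ) (hG : G ∈ GLpos)
    (hrelax : cauchy P G S = 0) :
    ∀ F ∈ GLpos, ψ F S = G.det * ψ (F * G⁻¹) 0 := by
  intro F hF
  have hGdet : G.det ≠ 0 := ne_of_gt hG
  have hGinv : IsUnit G.det := isUnit_iff_ne_zero.mpr hGdet
  have hFG : F * G⁻¹ ∈ GLpos := by
    have : (F * G⁻¹).det = F.det * G.det⁻¹ := by
      rw [Matrix.det_mul, Matrix.det_nonsing_inv, Ring.inverse_eq_inv']
    simp only [GLpos, Set.mem_setOf_eq, this]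
    exact mul_pos hF (inv_pos.mpr hG)
  have key := hISRI G hG (F * G⁻¹) hFG S hS
  rw [Matrix.nonsing_inv_mul_cancel_right G F hGinv, hrelax] at key
  exact key
end

section
/- Let ψ : GL⁺ × Sym(3) → ℝ be a strain energy with ψ(·;S) continuously differentiable and non-degenerate for every S (for every sequence (Fₙ) in GL⁺, if det Fₙ → 0 or ‖Fₙ‖ + ‖Fₙ⁻¹‖ → +∞ then ψ(Fₙ;S) → +∞), and let P(F;S) denote the Frobenius gradient of ψ(·;S) and T(F;S) = (det F)⁻¹ P(F;S) Fᵀ the Cauchy stress. Assume ψ satisfies the ISRI condition ψ(F₂F₁;S) = (det F₁)·ψ(F₂; T(F₁;S)) for all F₁, F₂ ∈ GL⁺ and S ∈ Sym(3), and assume the relaxed energy is polyconvex: ψ(F;0) = h(F, cof F, det F) for some convex h : M₃(ℝ) × M₃(ℝ) × (0,∞) → ℝ. Then for every S ∈ Sym(3) the energy ψ(·;S) is polyconvex, i.e. there exists a convex function h_S with ψ(F;S) = h_S(F, cof F, det F) for all F ∈ GL⁺. -/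
open Matrix Filter Topology

/-- The Frobenius norm of a 3×3 real matrix. -/
noncomputable def frob (A : Matrix (Fin 3) (Fin 3) ℝ) : ℝ :=
  Real.sqrt (Matrix.trace (Aᵀ * A))

/-- The cofactor matrix of a 3×3 real matrix: `cof A = (det A) (A⁻¹)ᵀ`. -/
noncomputable def cof (A : Matrix (Fin 3) (Fin 3) ℝ) : Matrix (Fin 3) (Fin 3) ℝ :=
  A.det • (A⁻¹)ᵀ

/-- `trace (Aᵀ A)` is the sum of squares of the entries. -/
lemma trace_transpose_mul_self (A : Matrix (Fin 3) (Fin 3) ℝ) :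
    Matrix.trace (Aᵀ * A) = ∑ i, ∑ j, (A i j) ^ 2 := by
  simp [Matrix.trace, Matrix.mul_apply, Matrix.diag, sq]
  rw [Finset.sum_comm]

/-- If `trace (Aᵀ A) = 0` then `A = 0`. -/
lemma eq_zero_of_trace_transpose_mul_self (A : Matrix (Fin 3) (Fin 3) ℝ)
    (h : Matrix.trace (Aᵀ * A) = 0) : A = 0 := by
  rw [trace_transpose_mul_self] at h
  ext i j
  have h1 := (Finset.sum_eq_zero_iff_of_nonneg
    (fun i _ => Finset.sum_nonneg fun j _ => sq_nonneg (A i j))).mp h i (Finset.mem_univ i)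
  have h2 := (Finset.sum_eq_zero_iff_of_nonneg
    (fun j _ => sq_nonneg (A i j))).mp h1 j (Finset.mem_univ j)
  simpa using pow_eq_zero_iff (n := 2) (by norm_num) |>.mp h2

/-- Each entry of a matrix is bounded by the Frobenius norm. -/
lemma abs_entry_le_frob (A : Matrix (Fin 3) (Fin 3) ℝ) (i j : Fin 3) : |A i j| ≤ frob A := by
  have h1 : (A i j) ^ 2 ≤ ∑ i, ∑ j, (A i j) ^ 2 :=
    calc (A i j) ^ 2 ≤ ∑ j, (A i j) ^ 2 :=
          Finset.single_le_sum (fun j _ => sq_nonneg (A i j)) (Finset.mem_univ j)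
      _ ≤ ∑ i, ∑ j, (A i j) ^ 2 :=
          Finset.single_le_sum (fun i _ => Finset.sum_nonneg fun j _ => sq_nonneg (A i j))
            (Finset.mem_univ i)
  calc |A i j| = Real.sqrt ((A i j) ^ 2) := (Real.sqrt_sq_eq_abs _).symm
    _ ≤ frob A := by rw [frob, trace_transpose_mul_self]; exact Real.sqrt_le_sqrt h1

lemma frob_nonneg (A : Matrix (Fin 3) (Fin 3) ℝ) : 0 ≤ frob A := Real.sqrt_nonneg _

/-- The cofactor is multiplicative. -/
lemma cof_mul (A B : Matrix (Fin 3) (Fin 3) ℝ) : cof (A * B) = cof A * cof B := by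
  simp only [cof, Matrix.mul_inv_rev, Matrix.det_mul, Matrix.transpose_mul]
  rw [Matrix.smul_mul, Matrix.mul_smul, smul_smul]

lemma det_inv' (A : Matrix (Fin 3) (Fin 3) ℝ) : (A⁻¹).det = A.det⁻¹ := by
  simp [Matrix.det_nonsing_inv, Ring.inverse_eq_inv']

/-- Under the ISRI restriction, polyconvexity of the relaxed energy `ψ(·;0)` is inherited
by `ψ(·;S)` for every symmetric initial stress `S`. -/
theorem polyconvexity_inherited_under_ISRI
    (ψ : Matrix (Fin 3) (Fin 3) ℝ → Matrix (Fin 3) (Fin 3) ℝ → ℝ)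
    (P : Matrix (Fin 3) (Fin 3) ℝ → Matrix (Fin 3) (Fin 3) ℝ → Matrix (Fin 3) (Fin 3) ℝ)
    (hgrad : ∀ S : Matrix (Fin 3) (Fin 3) ℝ, ∀ F ∈ GLpos, ∀ H : Matrix (Fin 3) (Fin 3) ℝ,
      HasDerivAt (fun t : ℝ => ψ (F + t • H) S) (Matrix.trace ((P F S)ᵀ * H)) 0)
    (hψcont : ∀ S : Matrix (Fin 3) (Fin 3) ℝ, ContinuousOn (fun F => ψ F S) GLpos)
    (hPcont : ∀ S : Matrix (Fin 3) (Fin 3) ℝ, ContinuousOn (fun F => P F S) GLpos)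
    (hnondeg : ∀ S : Matrix (Fin 3) (Fin 3) ℝ, ∀ Fs : ℕ → Matrix (Fin 3) (Fin 3) ℝ,
      (∀ n, Fs n ∈ GLpos) →
      (Tendsto (fun n => (Fs n).det) atTop (𝓝 0) ∨
        Tendsto (fun n => frob (Fs n) + frob (Fs n)⁻¹) atTop atTop) →
      Tendsto (fun n => ψ (Fs n) S) atTop atTop)
    (hISRI : ∀ F₁ ∈ GLpos, ∀ F₂ ∈ GLpos, ∀ S : Matrix (Fin 3) (Fin 3) ℝ, Sᵀ = S →
      ψ (F₂ * F₁) S = F₁.det * ψ F₂ (cauchy P F₁ S))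
    (h : Matrix (Fin 3) (Fin 3) ℝ × Matrix (Fin 3) (Fin 3) ℝ × ℝ → ℝ)
    (hconv : ConvexOn ℝ {p : Matrix (Fin 3) (Fin 3) ℝ × Matrix (Fin 3) (Fin 3) ℝ × ℝ |
      0 < p.2.2} h)
    (hpoly0 : ∀ F ∈ GLpos, ψ F 0 = h (F, cof F, F.det)) :
    ∀ S : Matrix (Fin 3) (Fin 3) ℝ, Sᵀ = S →
      ∃ hS : Matrix (Fin 3) (Fin 3) ℝ × Matrix (Fin 3) (Fin 3) ℝ × ℝ → ℝ,
        ConvexOn ℝ {p : Matrix (Fin 3) (Fin 3) ℝ × Matrix (Fin 3) (Fin 3) ℝ × ℝ |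
          0 < p.2.2} hS ∧
        ∀ F ∈ GLpos, ψ F S = hS (F, cof F, F.det) := by
  intro S hSsym
  have hone : (1 : Matrix (Fin 3) (Fin 3) ℝ) ∈ GLpos := by
    simp [GLpos]
  -- Step 1: the sublevel set {ψ(·;S) ≤ ψ(1;S)} is bounded away from the boundary of GL⁺.
  have hbound : ∃ R ε : ℝ, 0 < ε ∧
      ∀ F ∈ GLpos, ψ F S ≤ ψ 1 S → (frob F ≤ R ∧ ε ≤ F.det) := by
    by_contra hcon
    push_neg at hcon
    have hseq : ∀ n : ℕ, ∃ F, F ∈ GLpos ∧ ψ F S ≤ ψ 1 S ∧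
        ((n : ℝ) < frob F ∨ F.det < 1 / ((n : ℝ) + 1)) := by
      intro n
      obtain ⟨F, hF, hle, himp⟩ := hcon (n : ℝ) (1 / ((n : ℝ) + 1))
        (by positivity)
      by_cases hfr : frob F ≤ (n : ℝ)
      · exact ⟨F, hF, hle, Or.inr (himp hfr)⟩
      · exact ⟨F, hF, hle, Or.inl (not_le.mp hfr)⟩
    choose Fs h1 h2 h3 using hseq
    have hall := (Filter.Eventually.of_forall h3 : ∀ᶠ n in (atTop : Filter ℕ),
      (frob (Fs n) > (n : ℝ) ∨ (Fs n).det < 1 / ((n : ℝ) + 1)))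
    rcases Filter.frequently_or_distrib.mp hall.frequently with hfreq | hfreq
    · obtain ⟨φ, hφ, hφP⟩ := Filter.extraction_of_frequently_atTop hfreq
      have htend : Tendsto (fun k => frob (Fs (φ k)) + frob (Fs (φ k))⁻¹) atTop atTop := by
        refine tendsto_atTop_mono (fun k => ?_) tendsto_natCast_atTop_atTop
        have hk1 : (k : ℝ) ≤ (φ k : ℝ) := Nat.cast_le.mpr hφ.le_apply
        have hk2 : (φ k : ℝ) ≤ frob (Fs (φ k)) := (hφP k).le
        have := frob_nonneg (Fs (φ k))⁻¹
        linarith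
      have htop := hnondeg S (fun k => Fs (φ k)) (fun k => h1 _) (Or.inr htend)
      obtain ⟨k, hk⟩ := (htop.eventually_gt_atTop (ψ 1 S)).exists
      exact absurd (h2 (φ k)) (not_le.mpr hk)
    · obtain ⟨φ, hφ, hφQ⟩ := Filter.extraction_of_frequently_atTop hfreq
      have htend : Tendsto (fun k => (Fs (φ k)).det) atTop (𝓝 0) := by
        refine tendsto_of_tendsto_of_tendsto_of_le_of_le tendsto_const_nhds
          tendsto_one_div_add_atTop_nhds_zero_nat (fun k => (h1 (φ k)).le) (fun k => ?_)
        have hk1 : (k : ℝ) + 1 ≤ (φ k : ℝ) + 1 :=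
          add_le_add (Nat.cast_le.mpr hφ.le_apply) le_rfl
        have hk2 : 1 / ((φ k : ℝ) + 1) ≤ 1 / ((k : ℝ) + 1) :=
          one_div_le_one_div_of_le (by positivity) hk1
        exact le_trans (hφQ k).le hk2
      have htop := hnondeg S (fun k => Fs (φ k)) (fun k => h1 _) (Or.inl htend)
      obtain ⟨k, hk⟩ := (htop.eventually_gt_atTop (ψ 1 S)).exists
      exact absurd (h2 (φ k)) (not_le.mpr hk)
  obtain ⟨R, ε, hε, hRε⟩ := hbound
  -- Step 2: minimize ψ(·;S) on a compact set K containing the sublevel set.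
  set R' := max R 1 with hR'def
  set ε' := min ε 1 with hε'def
  have hε'pos : 0 < ε' := lt_min hε one_pos
  set K : Set (Matrix (Fin 3) (Fin 3) ℝ) :=
    {F | (∀ i j, F i j ∈ Set.Icc (-R') R') ∧ ε' ≤ F.det} with hKdef
  have hKsub : K ⊆ GLpos := fun F hF => lt_of_lt_of_le hε'pos hF.2
  have hKcl : IsClosed K := by
    have h2 : K = (⋂ i, ⋂ j, {F : Matrix (Fin 3) (Fin 3) ℝ | F i j ∈ Set.Icc (-R') R'})
        ∩ {F : Matrix (Fin 3) (Fin 3) ℝ | ε' ≤ F.det} := by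
      ext F; simp [hKdef, Set.mem_iInter]
    rw [h2]
    exact (isClosed_iInter fun i => isClosed_iInter fun j =>
        isClosed_Icc.preimage (continuous_apply_apply i j)).inter
      (isClosed_le continuous_const (Continuous.matrix_det continuous_id))
  have hKcpt : IsCompact K := by
    have hbox : IsCompact {F : Matrix (Fin 3) (Fin 3) ℝ | ∀ i j, F i j ∈ Set.Icc (-R') R'} := by
      have hc : IsCompact (Set.univ.pi fun _ : Fin 3 =>
          Set.univ.pi fun _ : Fin 3 => Set.Icc (-R') R' : Set (Fin 3 → Fin 3 → ℝ)) :=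
        isCompact_univ_pi fun _ => isCompact_univ_pi fun _ => isCompact_Icc
      have he : {F : Matrix (Fin 3) (Fin 3) ℝ | ∀ i j, F i j ∈ Set.Icc (-R') R'} =
          (Set.univ.pi fun _ : Fin 3 => Set.univ.pi fun _ : Fin 3 => Set.Icc (-R') R' :
          Set (Fin 3 → Fin 3 → ℝ)) := by
        ext F
        constructor
        · intro hF i _ j _
          exact hF i j
        · intro hF i j
          exact hF i (Set.mem_univ i) j (Set.mem_univ j)
      rw [he]
      exact hc
    exact hbox.of_isClosed_subset hKcl fun F hF => hF.1
  have honeK : (1 : Matrix (Fin 3) (Fin 3) ℝ) ∈ K := by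
    constructor
    · intro i j
      have hR'1 : (1 : ℝ) ≤ R' := le_max_right R 1
      rw [Matrix.one_apply]
      split <;> constructor <;> linarith
    · simp [hε'def, min_le_right ε 1]
  obtain ⟨F₀, hF₀K, hmin⟩ := hKcpt.exists_isMinOn ⟨1, honeK⟩ ((hψcont S).mono hKsub)
  have hF₀pos : F₀ ∈ GLpos := hKsub hF₀K
  have hd₀ : 0 < F₀.det := hF₀pos
  -- F₀ is a global minimizer of ψ(·;S) on GL⁺.
  have hglob : ∀ F ∈ GLpos, ψ F₀ S ≤ ψ F S := by
    intro F hF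
    by_cases hle : ψ F S ≤ ψ 1 S
    · obtain ⟨hfr, hdet⟩ := hRε F hF hle
      have hFK : F ∈ K := by
        constructor
        · intro i j
          have := (abs_entry_le_frob F i j).trans (hfr.trans (le_max_left R 1))
          exact Set.mem_Icc.mpr (abs_le.mp this)
        · exact le_trans (min_le_left ε 1) hdet
      exact hmin hFK
    · exact le_trans (hmin honeK) (not_le.mp hle).le
  -- Step 3: the gradient of ψ(·;S) vanishes at F₀, i.e. P(F₀;S) = 0.
  have hGLopen : IsOpen GLpos :=
    isOpen_lt continuous_const (Continuous.matrix_det continuous_id)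
  have hP0 : P F₀ S = 0 := by
    set A := P F₀ S with hAdef
    have hderiv := hgrad S F₀ hF₀pos A
    have hc : Continuous fun t : ℝ => F₀ + t • A :=
      continuous_const.add (continuous_id.smul continuous_const)
    have hmem : ∀ᶠ t in 𝓝 (0 : ℝ), F₀ + t • A ∈ GLpos := by
      have h0 : F₀ + (0 : ℝ) • A ∈ GLpos := by simpa using hF₀pos
      exact hc.continuousAt.eventually_mem (hGLopen.mem_nhds h0)
    have hlocal : IsLocalMin (fun t : ℝ => ψ (F₀ + t • A) S) 0 := by
      refine hmem.mono fun t ht => ?_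
      simpa using hglob _ ht
    have hzero := hlocal.hasDerivAt_eq_zero hderiv
    exact eq_zero_of_trace_transpose_mul_self A hzero
  have hcz : cauchy P F₀ S = 0 := by
    simp [cauchy, hP0]
  -- Step 4: key identity via ISRI.
  have hdetinv : (F₀⁻¹).det = F₀.det⁻¹ := det_inv' F₀
  have key : ∀ F ∈ GLpos,
      ψ F S = F₀.det * h (F * F₀⁻¹, cof F * cof F₀⁻¹, F.det * F₀.det⁻¹) := by
    intro F hF
    have hFpos : 0 < F.det := hF
    have hFmem : F * F₀⁻¹ ∈ GLpos := by
      show 0 < (F * F₀⁻¹).det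
      rw [Matrix.det_mul, hdetinv]
      exact mul_pos hFpos (inv_pos.mpr hd₀)
    have hIS := hISRI F₀ hF₀pos (F * F₀⁻¹) hFmem S hSsym
    have hFF : (F * F₀⁻¹) * F₀ = F := by
      rw [mul_assoc, Matrix.nonsing_inv_mul F₀ (isUnit_iff_ne_zero.mpr hd₀.ne'), mul_one]
    rw [hFF, hcz] at hIS
    rw [hIS, hpoly0 _ hFmem, ← cof_mul, Matrix.det_mul, hdetinv]
  -- Step 5: the polyconvex representative for ψ(·;S).
  refine ⟨fun p => F₀.det * h (p.1 * F₀⁻¹, p.2.1 * cof F₀⁻¹, p.2.2 * F₀.det⁻¹), ?_, ?_⟩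
  · have hsetconv : Convex ℝ
        {p : Matrix (Fin 3) (Fin 3) ℝ × Matrix (Fin 3) (Fin 3) ℝ × ℝ | 0 < p.2.2} := hconv.1
    refine ⟨hsetconv, ?_⟩
    intro p hp q hq a b ha hb hab
    have hLp : (0 : ℝ) < (p.1 * F₀⁻¹, p.2.1 * cof F₀⁻¹, p.2.2 * F₀.det⁻¹).2.2 :=
      mul_pos hp (inv_pos.mpr hd₀)
    have hLq : (0 : ℝ) < (q.1 * F₀⁻¹, q.2.1 * cof F₀⁻¹, q.2.2 * F₀.det⁻¹).2.2 :=
      mul_pos hq (inv_pos.mpr hd₀)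
    have hkey := hconv.2 hLp hLq ha hb hab
    have hL : ((a • p + b • q).1 * F₀⁻¹, (a • p + b • q).2.1 * cof F₀⁻¹,
          (a • p + b • q).2.2 * F₀.det⁻¹)
        = a • (p.1 * F₀⁻¹, p.2.1 * cof F₀⁻¹, p.2.2 * F₀.det⁻¹)
          + b • (q.1 * F₀⁻¹, q.2.1 * cof F₀⁻¹, q.2.2 * F₀.det⁻¹) := by
      refine Prod.ext ?_ (Prod.ext ?_ ?_)
      · simp only [Prod.fst_add, Prod.smul_fst, Prod.snd_add, Prod.smul_snd, Matrix.add_mul,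
          Matrix.smul_mul]
      · simp only [Prod.fst_add, Prod.smul_fst, Prod.snd_add, Prod.smul_snd, Matrix.add_mul,
          Matrix.smul_mul]
      · simp only [Prod.fst_add, Prod.smul_fst, Prod.snd_add, Prod.smul_snd, smul_eq_mul]
        ring
    simp only [hL, smul_eq_mul]
    calc F₀.det * h (a • _ + b • _) ≤ F₀.det * (a * h _ + b * h _) :=
          mul_le_mul_of_nonneg_left hkey hd₀.le
      _ = a * (F₀.det * h _) + b * (F₀.det * h _) := by ring
  · intro F hF
    exact key F hF
end
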